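/- Let n be a nonnegative integer, z1, z2 ∈ H, and s ∈ ℂ with Re(s) > n + 1. Then ∑_{c=1}^∞ ∑_{(a,d) ∈ ℤ², ad ≡ 1 (mod c)} c^{4s−2n} (c·conj(z1) + d)^{2n} / (|c z2 − a|^{4s−2n} · |c z1 + d|^{4s}) = ∑_{c=1}^∞ c^{2n−4s} ∑_{a0 = 1, gcd(a0, c) = 1}^{c} S_0(z2 + a0/c, 0, 2s − n) · S_{2n}(z1 + d0/c, 0, 2s), where for each a0 coprime to c, d0 ∈ {1, …, c} denotes the unique residue with a0 d0 ≡ −1 (mod c), and all the series converge absolutely. -/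

import Mathlib

open Complex Filter Topology

noncomputable section

/-- The `ν`-th term of the series `S_n(z, 0, s)`. -/
def Sterm (n : ℕ) (z s : ℂ) (ν : ℤ) : ℂ :=
  (starRingEnd ℂ z + (ν : ℂ)) ^ n / (‖z + (ν : ℂ)‖ : ℂ) ^ (2 * s)

/-- The series `S_n(z, 0, s) = ∑_{ν ∈ ℤ} (conj z + ν)^n / |z + ν|^{2s}`. -/
def Sseries (n : ℕ) (z s : ℂ) : ℂ := ∑' ν : ℤ, Sterm n z s ν

/-- The term of the `c > 0` part of `Ξ_n`, indexed by `c ≥ 1` and a pair `(a, d)` with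
`a d ≡ 1 (mod c)`. -/
def LHSterm (n : ℕ) (z1 z2 s : ℂ) (c : ℕ+) (p : ℤ × ℤ) : ℂ :=
  ((c : ℕ) : ℂ) ^ (4 * s - 2 * (n : ℂ)) * ((c : ℕ) * starRingEnd ℂ z1 + (p.2 : ℂ)) ^ (2 * n) /
    ((‖(c : ℕ) * z2 - (p.1 : ℂ)‖ : ℂ) ^ (4 * s - 2 * (n : ℂ)) *
      (‖(c : ℕ) * z1 + (p.2 : ℂ)‖ : ℂ) ^ (4 * s))

/-- For `a₀` coprime to `c`, the unique `d₀ ∈ {1, …, c}` with `a₀ d₀ ≡ −1 (mod c)`. -/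
def dZero (c a0 : ℕ) : ℕ :=
  if (-(a0 : ZMod c)⁻¹).val = 0 then c else (-(a0 : ZMod c)⁻¹).val

/- ## Auxiliary lemmas -/

lemma aux_lb (z : ℂ) (hz : 0 < z.im) :
    ∃ κ : ℝ, 0 < κ ∧ ∀ c d : ℝ, 0 < c → κ * (c + |d|) ≤ ‖(c:ℂ) * z + (d:ℂ)‖ := by
  have hx : (0:ℝ) < 1 + 2*|z.re| := by positivity
  refine ⟨min (min (1/4) (z.im/2)) (z.im / (1 + 2 * |z.re|)), by positivity, ?_⟩
  intro c d hc
  set κ := min (min (1/4) (z.im/2)) (z.im / (1 + 2 * |z.re|)) with hκ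
  have hκ1 : κ ≤ 1/4 := le_trans (min_le_left _ _) (min_le_left _ _)
  have hκ2 : κ ≤ z.im/2 := le_trans (min_le_left _ _) (min_le_right _ _)
  have hκ3 : κ ≤ z.im / (1 + 2*|z.re|) := min_le_right _ _
  have hκ0 : 0 < κ := by positivity
  have him : ((c:ℂ) * z + (d:ℂ)).im = c * z.im := by simp
  have hre : ((c:ℂ) * z + (d:ℂ)).re = c * z.re + d := by simp
  have h1 : c * z.im ≤ ‖(c:ℂ) * z + (d:ℂ)‖ := by
    have h := Complex.abs_im_le_norm ((c:ℂ)*z + (d:ℂ))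
    rw [him] at h
    exact le_trans (le_abs_self _) h
  have h2 : |c * z.re + d| ≤ ‖(c:ℂ)*z + (d:ℂ)‖ := by
    have h := Complex.abs_re_le_norm ((c:ℂ)*z + (d:ℂ))
    rw [hre] at h; exact h
  rcases le_or_gt (|d|) (2 * |z.re| * c) with hcase | hcase
  · have step : κ * (c + |d|) ≤ (z.im / (1+2*|z.re|)) * ((1 + 2*|z.re|) * c) := by
      apply mul_le_mul hκ3 (by nlinarith) (by positivity) (by positivity)
    calc κ * (c+|d|) ≤ (z.im / (1+2*|z.re|)) * ((1 + 2*|z.re|) * c) := step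
    _ = c * z.im := by field_simp
    _ ≤ _ := h1
  · have hzre : |c * z.re| ≤ |d|/2 := by
      rw [abs_mul, abs_of_pos hc]; nlinarith [abs_nonneg z.re, abs_nonneg d]
    have hd2 : |d|/2 ≤ |c * z.re + d| := by
      have habs : |d| ≤ |c*z.re + d| + |c*z.re| := by
        have h3 := abs_sub_abs_le_abs_sub d (-(c*z.re))
        have h0 : d - -(c*z.re) = c*z.re + d := by ring
        rw [h0, abs_neg] at h3
        linarith
      linarith
    have e1 : κ * c ≤ (z.im/2) * c := mul_le_mul_of_nonneg_right hκ2 hc.le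
    have e2 : κ * |d| ≤ (1/4) * |d| := mul_le_mul_of_nonneg_right hκ1 (abs_nonneg d)
    have e3 : (z.im/2) * c ≤ ‖(c:ℂ)*z + (d:ℂ)‖/2 := by linarith
    have e4 : (1/4) * |d| ≤ ‖(c:ℂ)*z + (d:ℂ)‖/2 := by
      have h5 := le_trans hd2 h2
      linarith
    calc κ * (c + |d|) = κ*c + κ*|d| := by ring
    _ ≤ ‖(c:ℂ)*z + (d:ℂ)‖/2 + ‖(c:ℂ)*z + (d:ℂ)‖/2 := by linarith
    _ = _ := by ring

lemma aux_zsum (t : ℝ) (ht : 1 < t) : Summable (fun k : ℕ => ((k:ℝ)+1) ^ (-t)) := by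
  have h : Summable (fun k : ℕ => ((k:ℝ)) ^ (-t)) := Real.summable_nat_rpow.mpr (by linarith)
  have := (summable_nat_add_iff (f := fun k : ℕ => ((k:ℝ)) ^ (-t)) 1).mpr h
  exact this.congr (by intro k; push_cast; ring_nf)

lemma aux_natblock (t : ℝ) (ht : 1 < t) (c : ℕ) (hc : 0 < c) :
    Summable (fun a : ℕ => ((c:ℝ) + a) ^ (-t)) ∧
    ∑' a : ℕ, ((c:ℝ) + a) ^ (-t) ≤ (∑' k : ℕ, ((k:ℝ)+1) ^ (-t)) * (c:ℝ) ^ (1-t) := by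
  haveI : NeZero c := ⟨hc.ne'⟩
  have hcR : (0:ℝ) < c := by exact_mod_cast hc
  set Z := ∑' k : ℕ, ((k:ℝ)+1) ^ (-t) with hZ
  have hsum : Summable (fun k : ℕ => ((c:ℝ)*((k:ℝ)+1)) ^ (-t)) := by
    have := (aux_zsum t ht).mul_left ((c:ℝ) ^ (-t))
    apply this.congr
    intro k
    rw [Real.mul_rpow hcR.le (by positivity)]
  have htsum : ∑' k : ℕ, ((c:ℝ)*((k:ℝ)+1)) ^ (-t) = (c:ℝ)^(-t) * Z := by
    rw [← tsum_mul_left]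
    congr 1; funext k
    rw [Real.mul_rpow hcR.le (by positivity)]
  have hfib : ∀ k : ℕ, ∑' y : Fin c, ((c:ℝ)*(((k, y).1:ℝ)+1)) ^ (-t)
      = (c:ℝ) * ((c:ℝ)*((k:ℝ)+1)) ^ (-t) := by
    intro k
    calc ∑' y : Fin c, ((c:ℝ)*(((k, y).1:ℝ)+1)) ^ (-t)
        = ∑' _ : Fin c, ((c:ℝ)*((k:ℝ)+1)) ^ (-t) := rfl
      _ = (c:ℝ) * ((c:ℝ)*((k:ℝ)+1)) ^ (-t) := by rw [tsum_const]; simp [nsmul_eq_mul]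
  have hprod : Summable (fun p : ℕ × Fin c => ((c:ℝ)*((p.1:ℝ)+1)) ^ (-t)) := by
    apply (summable_prod_of_nonneg ?_).mpr
    constructor
    · intro k; exact .of_finite
    · apply Summable.congr (hsum.mul_left (c:ℝ))
      intro k
      exact (hfib k).symm
    · intro p; positivity
  have hprodsum : ∑' p : ℕ × Fin c, ((c:ℝ)*((p.1:ℝ)+1)) ^ (-t)
      = (c:ℝ) * ∑' k : ℕ, ((c:ℝ)*((k:ℝ)+1)) ^ (-t) := by
    rw [Summable.tsum_prod hprod, ← tsum_mul_left]
    exact tsum_congr hfib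
  have hcc : (c:ℝ) * (c:ℝ)^(-t) = (c:ℝ)^(1-t) := by
    rw [show (1:ℝ)-t = 1 + -t by ring, Real.rpow_add hcR, Real.rpow_one]
  have hgs : Summable (fun a : ℕ => ((c:ℝ)*(((a/c : ℕ):ℝ)+1)) ^ (-t)) := by
    have h2 := hprod.comp_injective (Nat.divModEquiv c).injective
    exact h2.congr (fun a => rfl)
  have hgsum : ∑' a : ℕ, ((c:ℝ)*(((a/c : ℕ):ℝ)+1)) ^ (-t) = Z * (c:ℝ)^(1-t) := by
    have h3 : ∑' a : ℕ, ((c:ℝ)*(((a/c : ℕ):ℝ)+1)) ^ (-t)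
        = ∑' p : ℕ × Fin c, ((c:ℝ)*((p.1:ℝ)+1)) ^ (-t) :=
      (Nat.divModEquiv c).tsum_eq (fun p : ℕ × Fin c => ((c:ℝ)*((p.1:ℝ)+1)) ^ (-t))
    rw [h3, hprodsum, htsum, ← mul_assoc, hcc]
    ring
  have hle : ∀ a : ℕ, ((c:ℝ) + a) ^ (-t) ≤ ((c:ℝ)*(((a/c : ℕ):ℝ)+1)) ^ (-t) := by
    intro a
    apply Real.rpow_le_rpow_of_nonpos (by positivity) ?_ (by linarith)
    have h1 : ((a/c : ℕ):ℝ) * (c:ℝ) ≤ (a:ℝ) := by exact_mod_cast Nat.div_mul_le_self a c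
    nlinarith
  have hs : Summable (fun a : ℕ => ((c:ℝ) + a) ^ (-t)) :=
    Summable.of_nonneg_of_le (fun a => by positivity) hle hgs
  exact ⟨hs, le_trans (Summable.tsum_le_tsum hle hs hgs) (le_of_eq hgsum)⟩

lemma aux_block (t : ℝ) (ht : 1 < t) :
    ∃ K : ℝ, 0 < K ∧ ∀ c : ℕ, 0 < c →
      Summable (fun a : ℤ => ((c:ℝ) + |(a:ℝ)|) ^ (-t)) ∧
      ∑' a : ℤ, ((c:ℝ) + |(a:ℝ)|) ^ (-t) ≤ K * (c:ℝ) ^ (1 - t) := by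
  set Z := ∑' k : ℕ, ((k:ℝ)+1) ^ (-t) with hZ
  have hZpos : 0 < Z := by
    apply Summable.tsum_pos (aux_zsum t ht) (fun k => by positivity) 0
    positivity
  refine ⟨2 * Z, by positivity, ?_⟩
  intro c hc
  have hcR : (0:ℝ) < c := by exact_mod_cast hc
  obtain ⟨hnat, hnatsum⟩ := aux_natblock t ht c hc
  have hposnat : ∀ n : ℕ, (fun a : ℤ => ((c:ℝ) + |(a:ℝ)|) ^ (-t)) (n:ℤ) = ((c:ℝ) + n) ^ (-t) := by
    intro n; simp
  have hnegnat : ∀ n : ℕ, (fun a : ℤ => ((c:ℝ) + |(a:ℝ)|) ^ (-t)) (-(n:ℤ)) = ((c:ℝ) + n) ^ (-t) := by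
    intro n; simp
  have heq : ∀ n : ℕ, (fun a : ℤ => ((c:ℝ) + |(a:ℝ)|) ^ (-t)) (-((n:ℤ)+1))
      = ((c:ℝ) + ((n:ℝ)+1)) ^ (-t) := by
    intro n
    have h0 := hnegnat (n+1)
    push_cast at h0
    convert h0 using 3 <;> push_cast <;> ring
  have hshift : Summable (fun n : ℕ => ((c:ℝ) + ((n:ℝ)+1)) ^ (-t)) := by
    apply hnat.of_nonneg_of_le (fun n => by positivity)
    intro n
    apply Real.rpow_le_rpow_of_nonpos (by positivity) (by push_cast; linarith) (by linarith)
  have hsummable : Summable (fun a : ℤ => ((c:ℝ) + |(a:ℝ)|) ^ (-t)) := by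
    apply Summable.of_nat_of_neg (hnat.congr (fun n => (hposnat n).symm))
      (hnat.congr (fun n => (hnegnat n).symm))
  refine ⟨hsummable, ?_⟩
  have hsplit := tsum_of_nat_of_neg_add_one
    (f := fun a : ℤ => ((c:ℝ) + |(a:ℝ)|) ^ (-t))
    (hnat.congr (fun n => (hposnat n).symm))
    (hshift.congr (fun n => (heq n).symm))
  rw [hsplit]
  have hb1 : ∑' n : ℕ, (fun a : ℤ => ((c:ℝ) + |(a:ℝ)|) ^ (-t)) (n:ℤ) ≤ Z * (c:ℝ)^(1-t) := by
    rw [tsum_congr hposnat]; exact hnatsum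
  have hb2 : ∑' n : ℕ, (fun a : ℤ => ((c:ℝ) + |(a:ℝ)|) ^ (-t)) (-((n:ℤ)+1)) ≤ Z * (c:ℝ)^(1-t) := by
    rw [tsum_congr heq]
    calc ∑' n : ℕ, ((c:ℝ) + ((n:ℝ)+1)) ^ (-t)
        ≤ ∑' n : ℕ, ((c:ℝ) + (n:ℝ)) ^ (-t) := by
          apply Summable.tsum_le_tsum ?_ hshift hnat
          intro n
          apply Real.rpow_le_rpow_of_nonpos (by positivity) (by linarith) (by linarith)
      _ ≤ Z * (c:ℝ)^(1-t) := hnatsum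
  calc _ ≤ Z * (c:ℝ)^(1-t) + Z * (c:ℝ)^(1-t) := add_le_add hb1 hb2
    _ = 2 * Z * (c:ℝ)^(1-t) := by ring

lemma norm_LHSterm (n : ℕ) (z1 z2 s : ℂ) (hz1 : 0 < z1.im) (hz2 : 0 < z2.im) (c : ℕ+) (p : ℤ × ℤ) :
    ‖LHSterm n z1 z2 s c p‖ =
      ((c:ℕ):ℝ) ^ (4*s.re - 2*(n:ℝ)) /
        (‖((c:ℕ):ℂ) * z2 - (p.1:ℂ)‖ ^ (4*s.re - 2*(n:ℝ)) *
          ‖((c:ℕ):ℂ) * z1 + (p.2:ℂ)‖ ^ (4*s.re - 2*(n:ℝ))) := by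
  have hc : (0:ℝ) < ((c:ℕ):ℝ) := by exact_mod_cast c.pos
  set X := ‖((c:ℕ):ℂ) * z2 - (p.1:ℂ)‖ with hX
  set Y := ‖((c:ℕ):ℂ) * z1 + (p.2:ℂ)‖ with hY
  have hXpos : 0 < X := by
    have him : ((((c:ℕ):ℂ)*z2 - (p.1:ℂ))).im = ((c:ℕ):ℝ)*z2.im := by simp
    have h1 : ((c:ℕ):ℝ)*z2.im ≤ X := by
      rw [hX]
      calc ((c:ℕ):ℝ)*z2.im ≤ |(((c:ℕ):ℂ)*z2 - (p.1:ℂ)).im| := by rw [him]; exact le_abs_self _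
      _ ≤ _ := Complex.abs_im_le_norm _
    nlinarith
  have hYpos : 0 < Y := by
    have him : ((((c:ℕ):ℂ)*z1 + (p.2:ℂ))).im = ((c:ℕ):ℝ)*z1.im := by simp
    have h1 : ((c:ℕ):ℝ)*z1.im ≤ Y := by
      rw [hY]
      calc ((c:ℕ):ℝ)*z1.im ≤ |(((c:ℕ):ℂ)*z1 + (p.2:ℂ)).im| := by rw [him]; exact le_abs_self _
      _ ≤ _ := Complex.abs_im_le_norm _
    nlinarith
  have hre1 : (4*s - 2*(n:ℂ)).re = 4*s.re - 2*(n:ℝ) := by simp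
  have hre2 : (4*s : ℂ).re = 4*s.re := by simp
  have hconj : ((c:ℕ):ℂ) * starRingEnd ℂ z1 + (p.2:ℂ)
      = starRingEnd ℂ (((c:ℕ):ℂ) * z1 + (p.2:ℂ)) := by
    simp [map_add, map_mul]
  rw [LHSterm, norm_div, norm_mul, norm_mul, norm_pow, hconj]
  rw [Complex.norm_natCast_cpow_of_pos c.pos, hre1]
  rw [Complex.norm_conj]
  rw [Complex.norm_cpow_eq_rpow_re_of_pos hXpos, hre1]
  rw [Complex.norm_cpow_eq_rpow_re_of_pos hYpos, hre2]
  rw [← hY]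
  have hsplit : Y ^ (4*s.re) = Y ^ (4*s.re - 2*(n:ℝ)) * Y ^ (2*n : ℕ) := by
    rw [← Real.rpow_natCast Y (2*n)]
    rw [← Real.rpow_add hYpos]
    congr 1
    push_cast
    ring
  rw [hsplit]
  have h1 : Y ^ (2*n : ℕ) ≠ 0 := by positivity
  have h2 : X ^ (4*s.re - 2*(n:ℝ)) ≠ 0 := by positivity
  have h3 : Y ^ (4*s.re - 2*(n:ℝ)) ≠ 0 := by positivity
  field_simp

set_option maxHeartbeats 2000000 in
lemma grand_summable (n : ℕ) (z1 z2 s : ℂ) (hz1 : 0 < z1.im) (hz2 : 0 < z2.im)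
    (hs : (n:ℝ) + 1 < s.re) :
    Summable (fun x : Σ c : ℕ+, {p : ℤ × ℤ // p.1 * p.2 ≡ 1 [ZMOD ((c:ℕ):ℤ)]} =>
      ‖LHSterm n z1 z2 s x.1 x.2.1‖) := by
  set r : ℝ := 4*s.re - 2*(n:ℝ) with hr
  have hr3 : 3 < r := by
    have : (0:ℝ) ≤ n := Nat.cast_nonneg n
    rw [hr]; nlinarith
  obtain ⟨κ1, hκ1, hlb1⟩ := aux_lb z1 hz1
  obtain ⟨κ2, hκ2, hlb2⟩ := aux_lb z2 hz2
  obtain ⟨K, hK, hBl⟩ := aux_block r (by linarith)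
  set F : ℕ+ × ℤ × ℤ → ℝ := fun q =>
    (κ2^(-r) * κ1^(-r)) * (((q.1:ℕ):ℝ)^r *
      (((((q.1:ℕ):ℝ)) + |(q.2.1:ℝ)|)^(-r) * ((((q.1:ℕ):ℝ) + |(q.2.2:ℝ)|)^(-r)))) with hF
  have hFnn : ∀ q, 0 ≤ F q := by
    intro q; rw [hF]
    have : (0:ℝ) < ((q.1:ℕ):ℝ) := by exact_mod_cast q.1.pos
    positivity
  have hslice : ∀ c : ℕ+, Summable (fun v : ℤ × ℤ => F (c, v)) := by
    intro c
    have hg := (hBl (c:ℕ) c.pos).1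
    have hmul : Summable (fun v : ℤ × ℤ =>
        ((((c:ℕ):ℝ)) + |(v.1:ℝ)|)^(-r) * ((((c:ℕ):ℝ) + |(v.2:ℝ)|)^(-r))) :=
      hg.mul_of_nonneg hg (fun a => by positivity) (fun a => by positivity)
    exact (hmul.mul_left (κ2^(-r) * κ1^(-r) * ((c:ℕ):ℝ)^r)).congr
      (fun v => by simp only [hF]; ring)
  have hFs : Summable F := by
    apply (summable_prod_of_nonneg hFnn).mpr
    refine ⟨hslice, ?_⟩
    have hcpos : ∀ c : ℕ+, (0:ℝ) < ((c:ℕ):ℝ) := fun c => by exact_mod_cast c.pos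
    have hB : ∀ c : ℕ+, ∑' v : ℤ × ℤ, F (c, v)
        ≤ (κ2^(-r) * κ1^(-r) * K^2) * ((c:ℕ):ℝ)^(2-r) := by
      intro c
      obtain ⟨hg, hgsum⟩ := hBl (c:ℕ) c.pos
      have hmul : Summable (fun v : ℤ × ℤ =>
          ((((c:ℕ):ℝ)) + |(v.1:ℝ)|)^(-r) * ((((c:ℕ):ℝ) + |(v.2:ℝ)|)^(-r))) :=
        hg.mul_of_nonneg hg (fun a => by positivity) (fun a => by positivity)
      have h1 : ∑' v : ℤ × ℤ, F (c, v) = (κ2^(-r) * κ1^(-r)) * (((c:ℕ):ℝ)^r *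
          ∑' v : ℤ × ℤ, ((((c:ℕ):ℝ)) + |(v.1:ℝ)|)^(-r) * ((((c:ℕ):ℝ) + |(v.2:ℝ)|)^(-r))) := by
        rw [← tsum_mul_left, ← tsum_mul_left]
      have h2 : ∑' v : ℤ × ℤ, ((((c:ℕ):ℝ)) + |(v.1:ℝ)|)^(-r) * ((((c:ℕ):ℝ) + |(v.2:ℝ)|)^(-r))
          = (∑' a : ℤ, ((((c:ℕ):ℝ)) + |(a:ℝ)|)^(-r)) * ∑' a : ℤ, ((((c:ℕ):ℝ)) + |(a:ℝ)|)^(-r) :=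
        (Summable.tsum_mul_tsum hg hg hmul).symm
      rw [h1, h2]
      have htnn : 0 ≤ ∑' a : ℤ, ((((c:ℕ):ℝ)) + |(a:ℝ)|)^(-r) :=
        tsum_nonneg (fun a => by positivity)
      have hKc : (0:ℝ) ≤ K * ((c:ℕ):ℝ)^(1-r) := by positivity
      have hprodle : (∑' a : ℤ, ((((c:ℕ):ℝ)) + |(a:ℝ)|)^(-r)) * (∑' a : ℤ, ((((c:ℕ):ℝ)) + |(a:ℝ)|)^(-r))
          ≤ (K * ((c:ℕ):ℝ)^(1-r)) * (K * ((c:ℕ):ℝ)^(1-r)) :=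
        mul_le_mul hgsum hgsum htnn hKc
      have hcc : ((c:ℕ):ℝ)^r * (((c:ℕ):ℝ)^(1-r) * ((c:ℕ):ℝ)^(1-r)) = ((c:ℕ):ℝ)^(2-r) := by
        rw [← Real.rpow_add (hcpos c), ← Real.rpow_add (hcpos c)]
        congr 1
        ring
      calc (κ2^(-r) * κ1^(-r)) * (((c:ℕ):ℝ)^r * ((∑' a : ℤ, ((((c:ℕ):ℝ)) + |(a:ℝ)|)^(-r)) * ∑' a : ℤ, ((((c:ℕ):ℝ)) + |(a:ℝ)|)^(-r)))
          ≤ (κ2^(-r) * κ1^(-r)) * (((c:ℕ):ℝ)^r * ((K * ((c:ℕ):ℝ)^(1-r)) * (K * ((c:ℕ):ℝ)^(1-r)))) := by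
            apply mul_le_mul_of_nonneg_left ?_ (by positivity)
            exact mul_le_mul_of_nonneg_left hprodle (by positivity)
        _ = (κ2^(-r) * κ1^(-r) * K^2) * ((c:ℕ):ℝ)^(2-r) := by rw [← hcc]; ring
    apply Summable.of_nonneg_of_le (fun c => tsum_nonneg (fun v => hFnn _)) hB
    have hnat : Summable (fun m : ℕ => (m:ℝ)^(2-r)) := Real.summable_nat_rpow.mpr (by linarith)
    have := (hnat.comp_injective PNat.coe_injective).mul_left (κ2^(-r) * κ1^(-r) * K^2)
    exact this.congr (fun c => rfl)
  have hinj : Function.Injective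
      (fun x : Σ c : ℕ+, {p : ℤ × ℤ // p.1 * p.2 ≡ 1 [ZMOD ((c:ℕ):ℤ)]} => ((x.1, x.2.1) : ℕ+ × ℤ × ℤ)) := by
    rintro ⟨c, ⟨p, hp⟩⟩ ⟨c', ⟨p', hp'⟩⟩ h
    simp only [Prod.mk.injEq] at h
    obtain ⟨h1, h2⟩ := h
    subst h1
    subst h2
    rfl
  have hcomp := hFs.comp_injective hinj
  apply Summable.of_nonneg_of_le (fun x => norm_nonneg _) ?_ hcomp
  rintro ⟨c, ⟨⟨a, b⟩, hp⟩⟩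
  have hcpos : (0:ℝ) < ((c:ℕ):ℝ) := by exact_mod_cast c.pos
  rw [norm_LHSterm n z1 z2 s hz1 hz2 c (a,b)]
  set X := ‖((c:ℕ):ℂ) * z2 - ((a:ℤ):ℂ)‖ with hX
  set Y := ‖((c:ℕ):ℂ) * z1 + ((b:ℤ):ℂ)‖ with hY
  have hXlb : κ2 * (((c:ℕ):ℝ) + |(a:ℝ)|) ≤ X := by
    have h0 := hlb2 ((c:ℕ):ℝ) (-(a:ℝ)) hcpos
    rw [abs_neg] at h0
    have he : ((((c:ℕ):ℝ)):ℂ) * z2 + Complex.ofReal (-(a:ℝ)) = ((c:ℕ):ℂ) * z2 - ((a:ℤ):ℂ) := by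
      push_cast; ring
    rw [he] at h0
    exact h0
  have hYlb : κ1 * (((c:ℕ):ℝ) + |(b:ℝ)|) ≤ Y := by
    have h0 := hlb1 ((c:ℕ):ℝ) ((b:ℝ)) hcpos
    have he : ((((c:ℕ):ℝ)):ℂ) * z1 + Complex.ofReal ((b:ℝ)) = ((c:ℕ):ℂ) * z1 + ((b:ℤ):ℂ) := by
      push_cast; ring
    rw [he] at h0
    exact h0
  have hXr : (κ2 * (((c:ℕ):ℝ) + |(a:ℝ)|))^r ≤ X^r :=
    Real.rpow_le_rpow (by positivity) hXlb (by linarith)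
  have hYr : (κ1 * (((c:ℕ):ℝ) + |(b:ℝ)|))^r ≤ Y^r :=
    Real.rpow_le_rpow (by positivity) hYlb (by linarith)
  have hden : (0:ℝ) < (κ2 * (((c:ℕ):ℝ) + |(a:ℝ)|))^r * (κ1 * (((c:ℕ):ℝ) + |(b:ℝ)|))^r := by
    positivity
  have hstep : ((c:ℕ):ℝ)^r / (X^r * Y^r)
      ≤ ((c:ℕ):ℝ)^r / ((κ2 * (((c:ℕ):ℝ) + |(a:ℝ)|))^r * (κ1 * (((c:ℕ):ℝ) + |(b:ℝ)|))^r) := by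
    apply div_le_div_of_nonneg_left (by positivity) hden
    exact mul_le_mul hXr hYr (by positivity) (by positivity)
  refine le_trans hstep (le_of_eq ?_)
  show _ = F (c, a, b)
  have hA : (0:ℝ) < ((c:ℕ):ℝ) + |(a:ℝ)| := by positivity
  have hB' : (0:ℝ) < ((c:ℕ):ℝ) + |(b:ℝ)| := by positivity
  simp only [hF]
  rw [Real.rpow_neg hκ2.le, Real.rpow_neg hκ1.le, Real.rpow_neg hA.le, Real.rpow_neg hB'.le,
      Real.mul_rpow hκ2.le hA.le, Real.mul_rpow hκ1.le hB'.le]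
  field_simp

lemma im_shift (z : ℂ) (a0 c : ℕ) (ν : ℤ) :
    (z + (a0:ℂ)/((c:ℕ):ℂ) + (ν:ℂ)).im = z.im := by
  have h : (a0:ℂ)/((c:ℕ):ℂ) = (((a0:ℝ)/((c:ℕ):ℝ)):ℂ) := by push_cast; ring
  simp [h]

lemma im_shift0 (z : ℂ) (a0 c : ℕ) :
    (z + (a0:ℂ)/((c:ℕ):ℂ)).im = z.im := by
  have h : (a0:ℂ)/((c:ℕ):ℂ) = (((a0:ℝ)/((c:ℕ):ℝ)):ℂ) := by push_cast; ring
  simp [h]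

lemma norm_shift_pos (z : ℂ) (hz : 0 < z.im) (a0 c : ℕ) (ν : ℤ) :
    0 < ‖z + (a0:ℂ)/((c:ℕ):ℂ) + (ν:ℂ)‖ := by
  have h := im_shift z a0 c ν
  have h1 : z.im ≤ ‖z + (a0:ℂ)/((c:ℕ):ℂ) + (ν:ℂ)‖ := by
    calc z.im ≤ |(z + (a0:ℂ)/((c:ℕ):ℂ) + (ν:ℂ)).im| := by rw [h]; exact le_abs_self _
    _ ≤ _ := Complex.abs_im_le_norm _
  linarith

lemma norm_Sterm (m : ℕ) (w : ℂ) (hw : 0 < w.im) (u : ℂ) (ν : ℤ) :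
    ‖Sterm m w u ν‖ = ‖w + (ν:ℂ)‖ ^ ((m:ℝ) - (2*u).re) := by
  have hpos : 0 < ‖w + (ν:ℂ)‖ := by
    have him : (w + (ν:ℂ)).im = w.im := by simp
    have h1 : w.im ≤ ‖w + (ν:ℂ)‖ := by
      calc w.im ≤ |(w + (ν:ℂ)).im| := by rw [him]; exact le_abs_self _
      _ ≤ _ := Complex.abs_im_le_norm _
    linarith
  have hconj : starRingEnd ℂ w + (ν:ℂ) = starRingEnd ℂ (w + (ν:ℂ)) := by simp [map_add]
  rw [Sterm, norm_div, norm_pow, hconj]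
  rw [Complex.norm_conj]
  set N := ‖w + (ν:ℂ)‖ with hN
  rw [Complex.norm_cpow_eq_rpow_re_of_pos hpos]
  rw [← Real.rpow_natCast N m, ← Real.rpow_sub hpos]

set_option maxHeartbeats 1000000 in
lemma summable_norm_Sterm (m : ℕ) (w : ℂ) (hw : 0 < w.im) (u : ℂ)
    (hu : (m:ℝ) + 1 < (2*u).re) : Summable fun ν : ℤ => ‖Sterm m w u ν‖ := by
  obtain ⟨κ, hκ, hlb⟩ := aux_lb w hw
  set t : ℝ := (2*u).re - m with hT
  have ht : 1 < t := by rw [hT]; linarith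
  obtain ⟨K, hK, hBl⟩ := aux_block t ht
  obtain ⟨hsum1, _⟩ := hBl 1 one_pos
  have hcomp : ∀ ν : ℤ, ‖Sterm m w u ν‖ ≤ κ^(-t) * ((1:ℝ) + |(ν:ℝ)|) ^ (-t) := by
    intro ν
    rw [norm_Sterm m w hw u ν]
    have hlb' : κ * (1 + |(ν:ℝ)|) ≤ ‖w + (ν:ℂ)‖ := by
      have := hlb 1 (ν:ℝ) one_pos
      simpa using this
    have hpos2 : (0:ℝ) < κ * (1 + |(ν:ℝ)|) := by positivity
    have h1 : ‖w + (ν:ℂ)‖ ^ ((m:ℝ) - (2*u).re) ≤ (κ * (1 + |(ν:ℝ)|)) ^ ((m:ℝ) - (2*u).re) :=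
      Real.rpow_le_rpow_of_nonpos hpos2 hlb' (by linarith)
    calc ‖w + (ν:ℂ)‖ ^ ((m:ℝ) - (2*u).re) ≤ (κ * (1 + |(ν:ℝ)|)) ^ ((m:ℝ) - (2*u).re) := h1
    _ = κ^(-t) * ((1:ℝ) + |(ν:ℝ)|) ^ (-t) := by
        rw [Real.mul_rpow hκ.le (by positivity)]
        rw [show (m:ℝ) - (2*u).re = -t by rw [hT]; ring]
  have hS : Summable (fun ν : ℤ => κ^(-t) * ((1:ℝ) + |(ν:ℝ)|) ^ (-t)) := by
    have h2 := hsum1.mul_left (κ^(-t))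
    apply h2.congr
    intro ν
    norm_num
  exact Summable.of_nonneg_of_le (fun ν => norm_nonneg _) hcomp hS

lemma LHSterm_eq (n : ℕ) (z1 z2 s : ℂ) (hz1 : 0 < z1.im) (hz2 : 0 < z2.im) (c : ℕ+)
    (a0 d0 : ℕ) (ν μ : ℤ) :
    LHSterm n z1 z2 s c (-(a0:ℤ) - ((c:ℕ):ℤ)*ν, (d0:ℤ) + ((c:ℕ):ℤ)*μ) =
      ((c:ℕ):ℂ) ^ (2*(n:ℂ) - 4*s) * Sterm 0 (z2 + (a0:ℂ)/((c:ℕ):ℂ)) (2*s - (n:ℂ)) ν *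
        Sterm (2*n) (z1 + (d0:ℂ)/((c:ℕ):ℂ)) (2*s) μ := by
  have hcR : (0:ℝ) < ((c:ℕ):ℝ) := by exact_mod_cast c.pos
  have hC0 : ((c:ℕ):ℂ) ≠ 0 := Nat.cast_ne_zero.mpr c.pos.ne'
  have hnu : (0:ℝ) < ‖z2 + (a0:ℂ)/((c:ℕ):ℂ) + (ν:ℂ)‖ := norm_shift_pos z2 hz2 a0 c ν
  have hmu : (0:ℝ) < ‖z1 + (d0:ℂ)/((c:ℕ):ℂ) + (μ:ℂ)‖ := norm_shift_pos z1 hz1 d0 c μ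
  have key2 : ((c:ℕ):ℂ) * z2 - ((-(a0:ℤ) - ((c:ℕ):ℤ)*ν : ℤ):ℂ)
      = ((c:ℕ):ℂ) * (z2 + (a0:ℂ)/((c:ℕ):ℂ) + (ν:ℂ)) := by
    push_cast
    field_simp
    ring
  have key3 : ((c:ℕ):ℂ) * z1 + (((d0:ℤ) + ((c:ℕ):ℤ)*μ : ℤ):ℂ)
      = ((c:ℕ):ℂ) * (z1 + (d0:ℂ)/((c:ℕ):ℂ) + (μ:ℂ)) := by
    push_cast
    field_simp
    ring
  have key4 : ((c:ℕ):ℂ) * starRingEnd ℂ z1 + (((d0:ℤ) + ((c:ℕ):ℤ)*μ : ℤ):ℂ)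
      = ((c:ℕ):ℂ) * (starRingEnd ℂ (z1 + (d0:ℂ)/((c:ℕ):ℂ)) + (μ:ℂ)) := by
    rw [map_add, map_div₀]
    simp only [Complex.conj_natCast]
    push_cast
    field_simp
    ring
  have hnorm2 : ‖((c:ℕ):ℂ) * (z2 + (a0:ℂ)/((c:ℕ):ℂ) + (ν:ℂ))‖
      = ((c:ℕ):ℝ) * ‖z2 + (a0:ℂ)/((c:ℕ):ℂ) + (ν:ℂ)‖ := by
    rw [norm_mul, Complex.norm_natCast]
  have hnorm3 : ‖((c:ℕ):ℂ) * (z1 + (d0:ℂ)/((c:ℕ):ℂ) + (μ:ℂ))‖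
      = ((c:ℕ):ℝ) * ‖z1 + (d0:ℂ)/((c:ℕ):ℂ) + (μ:ℂ)‖ := by
    rw [norm_mul, Complex.norm_natCast]
  simp only [LHSterm, Sterm]
  rw [key2, key3, key4, hnorm2, hnorm3]
  rw [Complex.ofReal_mul, Complex.ofReal_mul]
  rw [mul_cpow_ofReal_nonneg hcR.le (norm_nonneg _), mul_cpow_ofReal_nonneg hcR.le (norm_nonneg _)]
  rw [Complex.ofReal_natCast]
  rw [mul_pow]
  rw [show (2:ℂ) * (2*s - (n:ℂ)) = 4*s - 2*(n:ℂ) from by ring,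
      show (2:ℂ) * (2*s) = 4*s from by ring]
  simp only [pow_zero]
  have hc2n : ((c:ℕ):ℂ) ^ (2*(n:ℂ) - 4*s) = ((c:ℕ):ℂ)^(2*n : ℕ) / ((c:ℕ):ℂ)^(4*s) := by
    rw [Complex.cpow_sub _ _ hC0, ← Complex.cpow_natCast]
    norm_num
  rw [hc2n]
  have hA : ((‖z2 + (a0:ℂ)/((c:ℕ):ℂ) + (ν:ℂ)‖ : ℝ):ℂ) ^ (4*s - 2*(n:ℂ)) ≠ 0 := by
    intro h
    exact absurd (Complex.cpow_eq_zero_iff _ _ |>.mp h).1 (by exact_mod_cast hnu.ne')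
  have hB : ((‖z1 + (d0:ℂ)/((c:ℕ):ℂ) + (μ:ℂ)‖ : ℝ):ℂ) ^ (4*s) ≠ 0 := by
    intro h
    exact absurd (Complex.cpow_eq_zero_iff _ _ |>.mp h).1 (by exact_mod_cast hmu.ne')
  have hCp1 : ((c:ℕ):ℂ) ^ (4*s - 2*(n:ℂ)) ≠ 0 := by
    intro h
    exact absurd (Complex.cpow_eq_zero_iff _ _ |>.mp h).1 hC0
  have hCp2 : ((c:ℕ):ℂ) ^ (4*s : ℂ) ≠ 0 := by
    intro h
    exact absurd (Complex.cpow_eq_zero_iff _ _ |>.mp h).1 hC0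
  have hCn : ((c:ℕ):ℂ)^(2*n : ℕ) ≠ 0 := pow_ne_zero _ hC0
  set P := ((starRingEnd ℂ) (z1 + (d0:ℂ)/((c:ℕ):ℂ)) + (μ:ℂ))^(2*n) with hP
  set A := ((‖z2 + (a0:ℂ)/((c:ℕ):ℂ) + (ν:ℂ)‖ : ℝ):ℂ) ^ (4*s - 2*(n:ℂ)) with hsA
  set B := ((‖z1 + (d0:ℂ)/((c:ℕ):ℂ) + (μ:ℂ)‖ : ℝ):ℂ) ^ (4*s) with hsB
  set C1 := ((c:ℕ):ℂ) ^ (4*s - 2*(n:ℂ)) with hsC1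
  set C3 := ((c:ℕ):ℂ) ^ (4*s : ℂ) with hsC3
  set Cn := ((c:ℕ):ℂ)^(2*n : ℕ) with hsCn
  field_simp

lemma dZero_cast (c : ℕ) (hc : 0 < c) (a0 : ℕ) :
    ((dZero c a0 : ℕ) : ZMod c) = -((a0 : ZMod c))⁻¹ := by
  haveI : NeZero c := ⟨hc.ne'⟩
  rw [dZero]
  split_ifs with h
  · rw [ZMod.natCast_self, ← (ZMod.val_eq_zero _).mp h]
  · rw [ZMod.natCast_val, ZMod.cast_id]

lemma mem_equiv (c : ℕ+) (a0 : ℕ) (hcop : Nat.Coprime a0 (c:ℕ)) (ν μ : ℤ) :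
    (-(a0:ℤ) - ((c:ℕ):ℤ)*ν) * ((dZero (c:ℕ) a0 : ℤ) + ((c:ℕ):ℤ)*μ) ≡ 1 [ZMOD ((c:ℕ):ℤ)] := by
  rw [← ZMod.intCast_eq_intCast_iff]
  push_cast
  rw [ZMod.natCast_self, dZero_cast (c:ℕ) c.pos a0]
  rw [zero_mul, zero_mul, sub_zero, add_zero, neg_mul_neg]
  exact ZMod.coe_mul_inv_eq_one a0 hcop

lemma inj_aux (c : ℕ+) (a0 a0' : ℕ) (h1 : a0 ∈ Finset.Icc 1 (c:ℕ)) (h1' : a0' ∈ Finset.Icc 1 (c:ℕ))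
    (ν ν' : ℤ) (h : -(a0:ℤ) - ((c:ℕ):ℤ)*ν = -(a0':ℤ) - ((c:ℕ):ℤ)*ν') : a0 = a0' ∧ ν = ν' := by
  rw [Finset.mem_Icc] at h1 h1'
  have hdvd : (a0:ℤ) - (a0':ℤ) = ((c:ℕ):ℤ) * (ν' - ν) := by linarith [h]
  have ha : a0 = a0' := by
    rcases eq_or_ne (ν' - ν) 0 with h0 | h0
    · rw [h0, mul_zero] at hdvd; omega
    · exfalso
      have h2 : (1:ℤ) ≤ |ν' - ν| := Int.one_le_abs h0
      have h3 : ((c:ℕ):ℤ) ≤ |((c:ℕ):ℤ) * (ν' - ν)| := by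
        rw [abs_mul, abs_of_nonneg (by positivity : (0:ℤ) ≤ ((c:ℕ):ℤ))]
        nlinarith [Int.natCast_pos.mpr c.pos]
      rw [← hdvd] at h3
      have h4 : |(a0:ℤ) - (a0':ℤ)| ≤ ((c:ℕ):ℤ) - 1 := by
        rw [abs_le]; omega
      omega
  refine ⟨ha, ?_⟩
  subst ha
  have : ((c:ℕ):ℤ) * ν = ((c:ℕ):ℤ) * ν' := by linarith [h]
  exact mul_left_cancel₀ (by positivity) this

lemma surj_aux (c : ℕ+) (a d : ℤ) (hp : a * d ≡ 1 [ZMOD ((c:ℕ):ℤ)]) :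
    ∃ a0 : ℕ, (a0 ∈ Finset.Icc 1 (c:ℕ) ∧ Nat.Coprime a0 (c:ℕ)) ∧
      ∃ ν μ : ℤ, -(a0:ℤ) - ((c:ℕ):ℤ)*ν = a ∧ (dZero (c:ℕ) a0 : ℤ) + ((c:ℕ):ℤ)*μ = d := by
  haveI : NeZero ((c:ℕ)) := ⟨c.pos.ne'⟩
  have h1 : ((a : ZMod (c:ℕ))) * (d : ZMod (c:ℕ)) = 1 := by
    have := (ZMod.intCast_eq_intCast_iff _ _ _).mpr hp
    push_cast at this
    exact this
  have hux : IsUnit ((a : ZMod (c:ℕ))) := IsUnit.of_mul_eq_one _ h1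
  set x : ZMod (c:ℕ) := (a : ZMod (c:ℕ)) with hx
  set a0 : ℕ := if (-x).val = 0 then (c:ℕ) else (-x).val with ha0
  have ha0cast : ((a0:ℕ) : ZMod (c:ℕ)) = -x := by
    rw [ha0]
    split_ifs with h
    · rw [ZMod.natCast_self, ← (ZMod.val_eq_zero _).mp h]
    · rw [ZMod.natCast_val, ZMod.cast_id]
  have ha0mem : a0 ∈ Finset.Icc 1 (c:ℕ) := by
    rw [Finset.mem_Icc]
    rw [ha0]
    split_ifs with h
    · exact ⟨c.pos, le_refl _⟩
    · exact ⟨Nat.one_le_iff_ne_zero.mpr h, (ZMod.val_lt _).le⟩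
  have ha0cop : Nat.Coprime a0 (c:ℕ) := by
    rw [← ZMod.isUnit_iff_coprime]
    rw [ha0cast]
    exact hux.neg
  have hd0 : ((dZero (c:ℕ) a0 : ℕ) : ZMod (c:ℕ)) = (d : ZMod (c:ℕ)) := by
    rw [dZero_cast (c:ℕ) c.pos a0, ha0cast]
    have hmul : (-x) * (-(d : ZMod (c:ℕ))) = 1 := by rw [neg_mul_neg]; exact h1
    have h2 : (-x)⁻¹ * (-x) = 1 := ZMod.inv_mul_of_unit (-x) hux.neg
    have hinv : (-x)⁻¹ = -(d : ZMod (c:ℕ)) := by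
      calc (-x)⁻¹ = (-x)⁻¹ * ((-x) * (-(d : ZMod (c:ℕ)))) := by rw [hmul, mul_one]
      _ = ((-x)⁻¹ * (-x)) * (-(d : ZMod (c:ℕ))) := by ring
      _ = -(d : ZMod (c:ℕ)) := by rw [h2, one_mul]
    rw [hinv, neg_neg]
  have hda : ((c:ℕ):ℤ) ∣ (a + a0) := by
    have h3 : ((a + a0 : ℤ) : ZMod (c:ℕ)) = 0 := by
      push_cast
      rw [ha0cast, ← hx]
      ring
    exact (ZMod.intCast_zmod_eq_zero_iff_dvd _ _).mp h3
  have hdd : ((c:ℕ):ℤ) ∣ (d - (dZero (c:ℕ) a0 : ℤ)) := by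
    have h3 : ((d - (dZero (c:ℕ) a0 : ℤ) : ℤ) : ZMod (c:ℕ)) = 0 := by
      push_cast
      rw [hd0]
      ring
    exact (ZMod.intCast_zmod_eq_zero_iff_dvd _ _).mp h3
  obtain ⟨k, hk⟩ := hda
  obtain ⟨l, hl⟩ := hdd
  exact ⟨a0, ⟨ha0mem, ha0cop⟩, -k, l, by linarith [hk], by linarith [hl]⟩


lemma hre_one (s : ℂ) (n : ℕ) : ((2:ℂ)*(2*s - (n:ℂ))).re = 4*s.re - 2*(n:ℝ) := by
  simp; ring

lemma hre_two (s : ℂ) : ((2:ℂ)*(2*s)).re = 4*s.re := by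
  simp; ring

lemma percEq (n : ℕ) (z1 z2 s : ℂ) (hz1 : 0 < z1.im) (hz2 : 0 < z2.im)
    (hs : (n : ℝ) + 1 < s.re) (c : ℕ+)
    (hslice : Summable (fun p : {p : ℤ × ℤ // p.1 * p.2 ≡ 1 [ZMOD ((c:ℕ):ℤ)]} =>
      LHSterm n z1 z2 s c p.1)) :
    ∑' p : {p : ℤ × ℤ // p.1 * p.2 ≡ 1 [ZMOD ((c:ℕ):ℤ)]}, LHSterm n z1 z2 s c p.1
      = ((c:ℕ):ℂ) ^ (2*(n:ℂ) - 4*s) *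
        ∑ a0 ∈ Finset.filter (fun a0 => Nat.Coprime a0 (c:ℕ)) (Finset.Icc 1 (c:ℕ)),
          Sseries 0 (z2 + (a0:ℂ)/((c:ℕ):ℂ)) (2*s - (n:ℂ)) *
            Sseries (2*n) (z1 + ((dZero (c:ℕ) a0 : ℕ):ℂ)/((c:ℕ):ℂ)) (2*s) := by
  have hnn : (0:ℝ) ≤ (n:ℝ) := Nat.cast_nonneg n
  have hu1 : ((0:ℕ):ℝ) + 1 < ((2:ℂ)*(2*s - (n:ℂ))).re := by
    rw [hre_one]; push_cast; nlinarith
  have hu2 : ((2*n:ℕ):ℝ) + 1 < ((2:ℂ)*(2*s)).re := by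
    rw [hre_two]; push_cast; nlinarith
  set A := Finset.filter (fun a0 => Nat.Coprime a0 (c:ℕ)) (Finset.Icc 1 (c:ℕ)) with hA
  let Φ : ({a0 // a0 ∈ A} × ℤ × ℤ) → {p : ℤ × ℤ // p.1 * p.2 ≡ 1 [ZMOD ((c:ℕ):ℤ)]} :=
    fun q => ⟨(-(q.1.1:ℤ) - ((c:ℕ):ℤ)*q.2.1, (dZero (c:ℕ) q.1.1 : ℤ) + ((c:ℕ):ℤ)*q.2.2),
      mem_equiv c q.1.1 (Finset.mem_filter.mp q.1.2).2 q.2.1 q.2.2⟩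
  have hbij : Function.Bijective Φ := by
    constructor
    · rintro ⟨⟨a0, ha0⟩, ν, μ⟩ ⟨⟨a0', ha0'⟩, ν', μ'⟩ h
      have h' := Subtype.ext_iff.mp h
      rw [Prod.ext_iff] at h'
      obtain ⟨e1, e2⟩ := h'
      simp only [Φ] at e1 e2
      obtain ⟨ea, eν⟩ := inj_aux c a0 a0'
        (Finset.mem_Icc.mpr (Finset.mem_Icc.mp (Finset.mem_filter.mp ha0).1))
        (Finset.mem_Icc.mpr (Finset.mem_Icc.mp (Finset.mem_filter.mp ha0').1)) ν ν' e1
      subst ea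
      have eμ : μ = μ' := by
        have h5 : ((c:ℕ):ℤ) * μ = ((c:ℕ):ℤ) * μ' := by
          have := e2
          omega
        exact mul_left_cancel₀ (by positivity) h5
      subst eν; subst eμ; rfl
    · rintro ⟨⟨a, d⟩, hp⟩
      obtain ⟨a0, ⟨hmem, hcop⟩, ν, μ, h1, h2⟩ := surj_aux c a d hp
      refine ⟨⟨⟨a0, Finset.mem_filter.mpr ⟨hmem, hcop⟩⟩, ν, μ⟩, ?_⟩
      apply Subtype.ext
      exact Prod.ext h1 h2
  let e := Equiv.ofBijective Φ hbij
  have hD : Summable (fun q : {a0 // a0 ∈ A} × ℤ × ℤ => LHSterm n z1 z2 s c (Φ q).1) :=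
    e.summable_iff.mpr hslice
  have hterm : ∀ q : {a0 // a0 ∈ A} × ℤ × ℤ, LHSterm n z1 z2 s c (Φ q).1
      = ((c:ℕ):ℂ) ^ (2*(n:ℂ) - 4*s) * Sterm 0 (z2 + (q.1.1:ℂ)/((c:ℕ):ℂ)) (2*s - (n:ℂ)) q.2.1 *
        Sterm (2*n) (z1 + ((dZero (c:ℕ) q.1.1 : ℕ):ℂ)/((c:ℕ):ℂ)) (2*s) q.2.2 :=
    fun q => LHSterm_eq n z1 z2 s hz1 hz2 c q.1.1 (dZero (c:ℕ) q.1.1) q.2.1 q.2.2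
  have hD' : Summable (fun q : {a0 // a0 ∈ A} × ℤ × ℤ => ((c:ℕ):ℂ) ^ (2*(n:ℂ) - 4*s) *
      Sterm 0 (z2 + (q.1.1:ℂ)/((c:ℕ):ℂ)) (2*s - (n:ℂ)) q.2.1 *
      Sterm (2*n) (z1 + ((dZero (c:ℕ) q.1.1 : ℕ):ℂ)/((c:ℕ):ℂ)) (2*s) q.2.2) :=
    hD.congr hterm
  have hinner : ∀ a0 : {a0 // a0 ∈ A},
      ∑' v : ℤ × ℤ, ((c:ℕ):ℂ) ^ (2*(n:ℂ) - 4*s) *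
        Sterm 0 (z2 + (a0.1:ℂ)/((c:ℕ):ℂ)) (2*s - (n:ℂ)) v.1 *
        Sterm (2*n) (z1 + ((dZero (c:ℕ) a0.1 : ℕ):ℂ)/((c:ℕ):ℂ)) (2*s) v.2
      = ((c:ℕ):ℂ) ^ (2*(n:ℂ) - 4*s) *
        (Sseries 0 (z2 + (a0.1:ℂ)/((c:ℕ):ℂ)) (2*s - (n:ℂ)) *
          Sseries (2*n) (z1 + ((dZero (c:ℕ) a0.1 : ℕ):ℂ)/((c:ℕ):ℂ)) (2*s)) := by
    intro a0
    have hw2 : 0 < (z2 + (a0.1:ℂ)/((c:ℕ):ℂ)).im := by rw [im_shift0]; exact hz2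
    have hw1 : 0 < (z1 + ((dZero (c:ℕ) a0.1 : ℕ):ℂ)/((c:ℕ):ℂ)).im := by
      rw [im_shift0]; exact hz1
    have hs1 : Summable fun ν : ℤ => ‖Sterm 0 (z2 + (a0.1:ℂ)/((c:ℕ):ℂ)) (2*s - (n:ℂ)) ν‖ :=
      summable_norm_Sterm 0 _ hw2 _ (by exact_mod_cast hu1)
    have hs2 : Summable fun ν : ℤ =>
        ‖Sterm (2*n) (z1 + ((dZero (c:ℕ) a0.1 : ℕ):ℂ)/((c:ℕ):ℂ)) (2*s) ν‖ :=
      summable_norm_Sterm (2*n) _ hw1 _ (by exact_mod_cast hu2)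
    calc ∑' v : ℤ × ℤ, ((c:ℕ):ℂ) ^ (2*(n:ℂ) - 4*s) *
          Sterm 0 (z2 + (a0.1:ℂ)/((c:ℕ):ℂ)) (2*s - (n:ℂ)) v.1 *
          Sterm (2*n) (z1 + ((dZero (c:ℕ) a0.1 : ℕ):ℂ)/((c:ℕ):ℂ)) (2*s) v.2
        = ∑' v : ℤ × ℤ, ((c:ℕ):ℂ) ^ (2*(n:ℂ) - 4*s) *
          (Sterm 0 (z2 + (a0.1:ℂ)/((c:ℕ):ℂ)) (2*s - (n:ℂ)) v.1 *
          Sterm (2*n) (z1 + ((dZero (c:ℕ) a0.1 : ℕ):ℂ)/((c:ℕ):ℂ)) (2*s) v.2) := by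
          apply tsum_congr; intro v; ring
      _ = ((c:ℕ):ℂ) ^ (2*(n:ℂ) - 4*s) * ∑' v : ℤ × ℤ,
          (Sterm 0 (z2 + (a0.1:ℂ)/((c:ℕ):ℂ)) (2*s - (n:ℂ)) v.1 *
          Sterm (2*n) (z1 + ((dZero (c:ℕ) a0.1 : ℕ):ℂ)/((c:ℕ):ℂ)) (2*s) v.2) := tsum_mul_left
      _ = ((c:ℕ):ℂ) ^ (2*(n:ℂ) - 4*s) *
          (Sseries 0 (z2 + (a0.1:ℂ)/((c:ℕ):ℂ)) (2*s - (n:ℂ)) *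
            Sseries (2*n) (z1 + ((dZero (c:ℕ) a0.1 : ℕ):ℂ)/((c:ℕ):ℂ)) (2*s)) := by
          rw [Sseries, Sseries, tsum_mul_tsum_of_summable_norm hs1 hs2]
  calc ∑' p : {p : ℤ × ℤ // p.1 * p.2 ≡ 1 [ZMOD ((c:ℕ):ℤ)]}, LHSterm n z1 z2 s c p.1
      = ∑' q : {a0 // a0 ∈ A} × ℤ × ℤ, LHSterm n z1 z2 s c (Φ q).1 :=
        (e.tsum_eq (fun p => LHSterm n z1 z2 s c p.1)).symm
    _ = ∑' q : {a0 // a0 ∈ A} × ℤ × ℤ, ((c:ℕ):ℂ) ^ (2*(n:ℂ) - 4*s) *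
          Sterm 0 (z2 + (q.1.1:ℂ)/((c:ℕ):ℂ)) (2*s - (n:ℂ)) q.2.1 *
          Sterm (2*n) (z1 + ((dZero (c:ℕ) q.1.1 : ℕ):ℂ)/((c:ℕ):ℂ)) (2*s) q.2.2 :=
        tsum_congr hterm
    _ = ∑' a0 : {a0 // a0 ∈ A}, ∑' v : ℤ × ℤ, ((c:ℕ):ℂ) ^ (2*(n:ℂ) - 4*s) *
          Sterm 0 (z2 + (a0.1:ℂ)/((c:ℕ):ℂ)) (2*s - (n:ℂ)) v.1 *
          Sterm (2*n) (z1 + ((dZero (c:ℕ) a0.1 : ℕ):ℂ)/((c:ℕ):ℂ)) (2*s) v.2 := Summable.tsum_prod hD'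
    _ = ∑' a0 : {a0 // a0 ∈ A}, ((c:ℕ):ℂ) ^ (2*(n:ℂ) - 4*s) *
          (Sseries 0 (z2 + (a0.1:ℂ)/((c:ℕ):ℂ)) (2*s - (n:ℂ)) *
            Sseries (2*n) (z1 + ((dZero (c:ℕ) a0.1 : ℕ):ℂ)/((c:ℕ):ℂ)) (2*s)) :=
        tsum_congr hinner
    _ = ∑ a0 ∈ A, ((c:ℕ):ℂ) ^ (2*(n:ℂ) - 4*s) *
          (Sseries 0 (z2 + (a0:ℂ)/((c:ℕ):ℂ)) (2*s - (n:ℂ)) *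
            Sseries (2*n) (z1 + ((dZero (c:ℕ) a0 : ℕ):ℂ)/((c:ℕ):ℂ)) (2*s)) :=
        Finset.tsum_subtype A (fun a0 => ((c:ℕ):ℂ) ^ (2*(n:ℂ) - 4*s) *
          (Sseries 0 (z2 + (a0:ℂ)/((c:ℕ):ℂ)) (2*s - (n:ℂ)) *
            Sseries (2*n) (z1 + ((dZero (c:ℕ) a0 : ℕ):ℂ)/((c:ℕ):ℂ)) (2*s)))
    _ = ((c:ℕ):ℂ) ^ (2*(n:ℂ) - 4*s) *
          ∑ a0 ∈ A, Sseries 0 (z2 + (a0:ℂ)/((c:ℕ):ℂ)) (2*s - (n:ℂ)) *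
            Sseries (2*n) (z1 + ((dZero (c:ℕ) a0 : ℕ):ℂ)/((c:ℕ):ℂ)) (2*s) := by
        rw [Finset.mul_sum]

/-- Theorem follows below. -/
theorem XiC_eq_Ssum (n : ℕ) (z1 z2 : ℂ) (hz1 : 0 < z1.im) (hz2 : 0 < z2.im)
    (s : ℂ) (hs : (n : ℝ) + 1 < s.re) :
    Summable (fun x : Σ c : ℕ+, {p : ℤ × ℤ // p.1 * p.2 ≡ 1 [ZMOD ((c : ℕ) : ℤ)]} =>
      ‖LHSterm n z1 z2 s x.1 x.2.1‖) ∧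
    (∀ (c : ℕ+) (a0 : ℕ), a0 ∈ Finset.filter (fun a0 => Nat.Coprime a0 (c : ℕ))
        (Finset.Icc 1 (c : ℕ)) →
      Summable (fun ν : ℤ => ‖Sterm 0 (z2 + (a0 : ℂ) / (c : ℕ)) (2 * s - (n : ℂ)) ν‖) ∧
      Summable (fun ν : ℤ =>
        ‖Sterm (2 * n) (z1 + ((dZero (c : ℕ) a0 : ℕ) : ℂ) / (c : ℕ)) (2 * s) ν‖)) ∧
    Summable (fun c : ℕ+ => ‖((c : ℕ) : ℂ) ^ (2 * (n : ℂ) - 4 * s) *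
      ∑ a0 ∈ Finset.filter (fun a0 => Nat.Coprime a0 (c : ℕ)) (Finset.Icc 1 (c : ℕ)),
        Sseries 0 (z2 + (a0 : ℂ) / (c : ℕ)) (2 * s - (n : ℂ)) *
          Sseries (2 * n) (z1 + ((dZero (c : ℕ) a0 : ℕ) : ℂ) / (c : ℕ)) (2 * s)‖) ∧
    (∑' c : ℕ+, ∑' p : {p : ℤ × ℤ // p.1 * p.2 ≡ 1 [ZMOD ((c : ℕ) : ℤ)]},
        LHSterm n z1 z2 s c p.1) =
      ∑' c : ℕ+, ((c : ℕ) : ℂ) ^ (2 * (n : ℂ) - 4 * s) *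
        ∑ a0 ∈ Finset.filter (fun a0 => Nat.Coprime a0 (c : ℕ)) (Finset.Icc 1 (c : ℕ)),
          Sseries 0 (z2 + (a0 : ℂ) / (c : ℕ)) (2 * s - (n : ℂ)) *
            Sseries (2 * n) (z1 + ((dZero (c : ℕ) a0 : ℕ) : ℂ) / (c : ℕ)) (2 * s) := by
  have hsig := grand_summable n z1 z2 s hz1 hz2 hs
  have hnn : ∀ x : Σ c : ℕ+, {p : ℤ × ℤ // p.1 * p.2 ≡ 1 [ZMOD ((c:ℕ):ℤ)]},
      0 ≤ ‖LHSterm n z1 z2 s x.1 x.2.1‖ := fun x => norm_nonneg _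
  have hparts := (summable_sigma_of_nonneg hnn).mp hsig
  have hsliceN : ∀ c : ℕ+, Summable (fun p : {p : ℤ × ℤ // p.1 * p.2 ≡ 1 [ZMOD ((c:ℕ):ℤ)]} =>
      ‖LHSterm n z1 z2 s c p.1‖) := hparts.1
  have hsliceC : ∀ c : ℕ+, Summable (fun p : {p : ℤ × ℤ // p.1 * p.2 ≡ 1 [ZMOD ((c:ℕ):ℤ)]} =>
      LHSterm n z1 z2 s c p.1) := fun c => (hsliceN c).of_norm
  have hnnn : (0:ℝ) ≤ (n:ℝ) := Nat.cast_nonneg n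
  have hu1 : ((0:ℕ):ℝ) + 1 < ((2:ℂ)*(2*s - (n:ℂ))).re := by
    rw [hre_one]; push_cast; nlinarith
  have hu2 : ((2*n:ℕ):ℝ) + 1 < ((2:ℂ)*(2*s)).re := by
    rw [hre_two]; push_cast; nlinarith
  refine ⟨hsig, ?_, ?_, ?_⟩
  · intro c a0 _
    constructor
    · exact summable_norm_Sterm 0 _ (by rw [im_shift0]; exact hz2) _ (by exact_mod_cast hu1)
    · exact summable_norm_Sterm (2*n) _ (by rw [im_shift0]; exact hz1) _ (by exact_mod_cast hu2)
  · apply Summable.of_nonneg_of_le (fun c => norm_nonneg _) ?_ hparts.2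
    intro c
    rw [(percEq n z1 z2 s hz1 hz2 hs c (hsliceC c)).symm]
    exact norm_tsum_le_tsum_norm (hsliceN c)
  · exact tsum_congr (fun c => percEq n z1 z2 s hz1 hz2 hs c (hsliceC c))


end
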